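/- (Nash–Nathanson) If A is a set of nonnegative integers with 0 ∈ A, lower asymptotic density d_L(A) > 0, and the greatest common divisor of the positive elements of A equal to 1, then A is an asymptotic basis of order h for some positive integer h. -/

import Mathlib

open Pointwise Filter

/-- The counting function of a set of nonnegative integers: the number of
positive elements of `A` that are at most `n`. -/
noncomputable def countingFn (A : Set ℕ) (n : ℕ) : ℕ := (A ∩ Set.Icc 1 n).ncard

/-- The Shnirel'man density `σ(A) = inf_{n ≥ 1} A(n)/n`. -/
noncomputable def shnirelmanDensity (A : Set ℕ) : ℝ :=
  ⨅ n : {n : ℕ // 0 < n}, (countingFn A (n : ℕ) : ℝ) / ((n : ℕ) : ℝ)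

/-- The lower asymptotic density `d_L(A) = liminf_{n → ∞} A(n)/n`. -/
noncomputable def lowerDensity (A : Set ℕ) : ℝ :=
  liminf (fun n : ℕ => (countingFn A n : ℝ) / (n : ℝ)) atTop

/-- `A` is an additive basis of order `h`: every nonnegative integer is the
sum of exactly `h` elements of `A` (with repetitions allowed). -/
def IsBasisOfOrder (A : Set ℕ) (h : ℕ) : Prop :=
  ∀ n : ℕ, ∃ c : Fin h → ℕ, (∀ i, c i ∈ A) ∧ ∑ i, c i = n

/-- `A` is an asymptotic basis of order `h`: every sufficiently large integer
is the sum of exactly `h` elements of `A` (with repetitions allowed). -/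
def IsAsymptoticBasisOfOrder (A : Set ℕ) (h : ℕ) : Prop :=
  ∀ᶠ n : ℕ in atTop, ∃ c : Fin h → ℕ, (∀ i, c i ∈ A) ∧ ∑ i, c i = n

/-- A minimal asymptotic basis of order `h` is an asymptotic basis of order `h`
no proper subset of which is an asymptotic basis of order `h`. -/
def IsMinimalAsymptoticBasisOfOrder (A : Set ℕ) (h : ℕ) : Prop :=
  IsAsymptoticBasisOfOrder A h ∧
    ∀ B : Set ℕ, B ⊂ A → ¬ IsAsymptoticBasisOfOrder B h

/-- A maximal asymptotic nonbasis of order `h` is a set that is not an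
asymptotic basis of order `h`, but such that adjoining any element outside it
produces an asymptotic basis of order `h`. -/
def IsMaximalAsymptoticNonbasisOfOrder (A : Set ℕ) (h : ℕ) : Prop :=
  ¬ IsAsymptoticBasisOfOrder A h ∧
    ∀ b : ℕ, b ∉ A → IsAsymptoticBasisOfOrder (A ∪ {b}) h

open Classical in
noncomputable def cnt (A : Set ℕ) (n : ℕ) : ℕ := ((Finset.Icc 1 n).filter (· ∈ A)).card

lemma countingFn_eq (A : Set ℕ) (n : ℕ) : countingFn A n = cnt A n := by
  classical
  rw [countingFn, cnt, ← Set.ncard_coe_finset]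
  congr 1
  ext x
  simp only [Finset.coe_filter, Finset.mem_Icc, Set.mem_inter_iff, Set.mem_Icc,
    Set.mem_setOf_eq]
  tauto

lemma cnt_le (A : Set ℕ) (n : ℕ) : cnt A n ≤ n := by
  classical
  calc ((Finset.Icc 1 n).filter (· ∈ A)).card ≤ (Finset.Icc 1 n).card :=
        Finset.card_filter_le _ _
    _ = n := by rw [Nat.card_Icc]; omega

lemma cnt_mono_set {A B : Set ℕ} (h : A ⊆ B) (n : ℕ) : cnt A n ≤ cnt B n := by
  classical
  exact Finset.card_le_card (Finset.monotone_filter_right _ (fun x _ hx => h hx))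

lemma cnt_mono_n (A : Set ℕ) {n m : ℕ} (h : n ≤ m) : cnt A n ≤ cnt A m := by
  classical
  exact Finset.card_le_card (Finset.filter_subset_filter _ (Finset.Icc_subset_Icc_right h))

lemma subset_add_left {A B : Set ℕ} (hA0 : 0 ∈ A) : B ⊆ A + B := fun b hb =>
  ⟨0, hA0, b, hb, zero_add b⟩

lemma sch (A B : Set ℕ) (hA0 : 0 ∈ A) (hB0 : 0 ∈ B) (δ : ℝ) (hδ0 : 0 ≤ δ)
    (hB : ∀ m : ℕ, δ * m ≤ cnt B m) :
    ∀ n : ℕ, (cnt A n : ℝ) + δ * ((n : ℝ) - cnt A n) ≤ cnt (A + B) n := by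
  classical
  intro n
  induction n using Nat.strong_induction_on with
  | _ n IH =>
  rcases eq_or_ne ((Finset.Icc 1 n).filter (· ∈ A)) ∅ with hF | hF
  · have hA : cnt A n = 0 := by rw [cnt, hF]; simp
    have hsub : cnt B n ≤ cnt (A + B) n := cnt_mono_set (subset_add_left hA0) n
    have := hB n
    rw [hA]
    push_cast
    have : (cnt B n : ℝ) ≤ cnt (A + B) n := by exact_mod_cast hsub
    linarith [hB n]
  · -- nonempty case
    have hFne : ((Finset.Icc 1 n).filter (· ∈ A)).Nonempty := Finset.nonempty_iff_ne_empty.2 hF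
    set a := ((Finset.Icc 1 n).filter (· ∈ A)).max' hFne with ha_def
    have haF : a ∈ (Finset.Icc 1 n).filter (· ∈ A) := Finset.max'_mem _ _
    have haA : a ∈ A := (Finset.mem_filter.1 haF).2
    have ha1 : 1 ≤ a := (Finset.mem_Icc.1 (Finset.mem_filter.1 haF).1).1
    have han : a ≤ n := (Finset.mem_Icc.1 (Finset.mem_filter.1 haF).1).2
    have hamax : ∀ x ∈ (Finset.Icc 1 n).filter (· ∈ A), x ≤ a := fun x hx =>
      Finset.le_max' _ x hx
    -- claim 1 : cnt A n = cnt A (a-1) + 1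
    have hc1 : cnt A n = cnt A (a - 1) + 1 := by
      have : (Finset.Icc 1 n).filter (· ∈ A)
          = insert a ((Finset.Icc 1 (a - 1)).filter (· ∈ A)) := by
        ext x
        simp only [Finset.mem_filter, Finset.mem_Icc, Finset.mem_insert]
        constructor
        · rintro ⟨⟨h1, h2⟩, h3⟩
          have := hamax x (by simp only [Finset.mem_filter, Finset.mem_Icc]; exact ⟨⟨h1, h2⟩, h3⟩)
          rcases eq_or_lt_of_le this with h | h
          · exact Or.inl h
          · exact Or.inr ⟨⟨h1, by omega⟩, h3⟩
        · rintro (rfl | ⟨⟨h1, h2⟩, h3⟩)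
          · exact ⟨⟨ha1, han⟩, haA⟩
          · exact ⟨⟨h1, by omega⟩, h3⟩
      rw [cnt, this, Finset.card_insert_of_notMem, cnt]
      simp only [Finset.mem_filter, Finset.mem_Icc]
      rintro ⟨⟨_, h2⟩, _⟩
      omega
    -- claim 2 : cnt E n ≥ cnt E (a-1) + 1 + cnt B (n-a)
    set E := A + B with hE_def
    have hc2 : cnt E (a - 1) + 1 + cnt B (n - a) ≤ cnt E n := by
      have haE : a ∈ E := ⟨a, haA, 0, hB0, add_zero a⟩
      set S1 := (Finset.Icc 1 (a - 1)).filter (· ∈ E) with hS1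
      set S3 := ((Finset.Icc 1 (n - a)).filter (· ∈ B)).image (a + ·) with hS3
      have hsub : S1 ∪ (insert a S3) ⊆ (Finset.Icc 1 n).filter (· ∈ E) := by
        intro x hx
        simp only [hS1, hS3, Finset.mem_union, Finset.mem_insert, Finset.mem_image,
          Finset.mem_filter, Finset.mem_Icc] at hx ⊢
        rcases hx with ⟨⟨h1, h2⟩, h3⟩ | rfl | ⟨b, ⟨⟨hb1, hb2⟩, hbB⟩, rfl⟩
        · exact ⟨⟨h1, by omega⟩, h3⟩
        · exact ⟨⟨ha1, han⟩, haE⟩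
        · exact ⟨⟨by omega, by omega⟩, ⟨a, haA, b, hbB, rfl⟩⟩
      have hcard3 : S3.card = cnt B (n - a) := by
        rw [hS3, Finset.card_image_of_injective _ (add_right_injective a), cnt]
      have hdisj2 : a ∉ S3 := by
        simp only [hS3, Finset.mem_image, Finset.mem_filter, Finset.mem_Icc]
        rintro ⟨b, ⟨⟨hb1, _⟩, _⟩, hba⟩
        omega
      have hdisj1 : Disjoint S1 (insert a S3) := by
        rw [Finset.disjoint_left]
        intro x hx hx'
        simp only [hS1, Finset.mem_filter, Finset.mem_Icc] at hx
        simp only [hS3, Finset.mem_insert, Finset.mem_image, Finset.mem_filter,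
          Finset.mem_Icc] at hx'
        rcases hx' with rfl | ⟨b, ⟨⟨hb1, _⟩, _⟩, hba⟩ <;> omega
      calc cnt E (a - 1) + 1 + cnt B (n - a)
          = (S1 ∪ insert a S3).card := by
            rw [Finset.card_union_of_disjoint hdisj1,
              Finset.card_insert_of_notMem hdisj2, hcard3, cnt]
            ring
        _ ≤ _ := Finset.card_le_card hsub
    have hIH := IH (a - 1) (by omega)
    have hBn := hB (n - a)
    have hcast1 : ((a - 1 : ℕ) : ℝ) = (a : ℝ) - 1 := by
      have : (1:ℕ) ≤ a := ha1; push_cast [this]; ring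
    have hcast2 : ((n - a : ℕ) : ℝ) = (n : ℝ) - a := by
      push_cast [han]; ring
    have hc2' : (cnt E (a-1) : ℝ) + 1 + cnt B (n-a) ≤ cnt E n := by exact_mod_cast hc2
    rw [hc1]
    rw [hcast1] at hIH
    rw [hcast2] at hBn
    push_cast
    linarith

def Good (A : Set ℕ) (k n : ℕ) : Prop :=
  ∃ M : Multiset ℕ, (∀ x ∈ M, x ∈ A) ∧ M.card ≤ k ∧ M.sum = n

lemma good_zero (A : Set ℕ) (k : ℕ) : Good A k 0 := ⟨0, by simp, by simp, by simp⟩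

lemma good_mem {A : Set ℕ} {a : ℕ} (ha : a ∈ A) : Good A 1 a :=
  ⟨{a}, by simpa using ha, by simp, by simp⟩

lemma good_mono {A : Set ℕ} {k k' n : ℕ} (h : k ≤ k') (hg : Good A k n) : Good A k' n := by
  obtain ⟨M, h1, h2, h3⟩ := hg
  exact ⟨M, h1, h2.trans h, h3⟩

lemma good_add {A : Set ℕ} {k1 k2 n1 n2 : ℕ} (h1 : Good A k1 n1) (h2 : Good A k2 n2) :
    Good A (k1 + k2) (n1 + n2) := by
  obtain ⟨M1, ha1, hb1, hc1⟩ := h1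
  obtain ⟨M2, ha2, hb2, hc2⟩ := h2
  refine ⟨M1 + M2, ?_, ?_, ?_⟩
  · intro x hx; rcases Multiset.mem_add.1 hx with h | h; exacts [ha1 x h, ha2 x h]
  · rw [Multiset.card_add]; omega
  · rw [Multiset.sum_add, hc1, hc2]

lemma good_nsmul {A : Set ℕ} {k n : ℕ} (h : Good A k n) (c : ℕ) : Good A (c * k) (c * n) := by
  induction c with
  | zero => simpa using good_zero A 0
  | succ m IH =>
    have := good_add IH h
    simpa [Nat.succ_mul] using this

lemma good_of_closure {A : Set ℕ} {n : ℕ} (h : n ∈ AddSubmonoid.closure A) :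
    ∃ k, Good A k n := by
  induction h using AddSubmonoid.closure_induction with
  | mem x hx => exact ⟨1, good_mem hx⟩
  | zero => exact ⟨0, good_zero A 0⟩
  | add x y hx hy ihx ihy =>
    obtain ⟨k1, h1⟩ := ihx; obtain ⟨k2, h2⟩ := ihy
    exact ⟨k1 + k2, good_add h1 h2⟩

-- existence of consecutive representable numbers

lemma exists_consecutive (A : Set ℕ) (h0 : 0 ∈ A)
    (hgcd : ∀ d : ℕ, (∀ a ∈ A, d ∣ a) → d = 1) :
    ∃ q k1 k2 : ℕ, Good A k1 (q + 1) ∧ Good A k2 q := by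
  classical
  set T : Set ℤ := (fun n : ℕ => (n : ℤ)) '' A with hT
  have h1T : (1 : ℤ) ∈ AddSubgroup.closure T := by
    obtain ⟨d, hd⟩ := Int.subgroup_cyclic (AddSubgroup.closure T)
    have hdvd : ∀ a ∈ A, d.natAbs ∣ a := by
      intro a ha
      have : (a : ℤ) ∈ AddSubgroup.closure T :=
        AddSubgroup.subset_closure ⟨a, ha, rfl⟩
      rw [hd, AddSubgroup.mem_closure_singleton] at this
      obtain ⟨m, hm⟩ := this
      have hdv : d ∣ (a : ℤ) := ⟨m, by rw [← hm]; simp [smul_eq_mul]; ring⟩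
      have := Int.natAbs_dvd_natAbs.2 hdv
      simpa using this
    have hd1 := hgcd d.natAbs hdvd
    rw [hd]
    rw [AddSubgroup.mem_closure_singleton]
    rcases Int.natAbs_eq_iff.1 hd1 with h | h
    · exact ⟨1, by simp [h]⟩
    · exact ⟨-1, by simp [h]⟩
  -- every element of the subgroup closure is a difference p - q of monoid elements
  have key : ∀ x ∈ AddSubgroup.closure T, ∃ p q : ℕ,
      (p ∈ AddSubmonoid.closure A) ∧ (q ∈ AddSubmonoid.closure A) ∧ (x = (p : ℤ) - q) := by
    intro x hx
    induction hx using AddSubgroup.closure_induction with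
    | mem y hy =>
      obtain ⟨a, ha, rfl⟩ := hy
      exact ⟨a, 0, AddSubmonoid.subset_closure ha, (AddSubmonoid.closure A).zero_mem, by simp⟩
    | zero => exact ⟨0, 0, (AddSubmonoid.closure A).zero_mem, (AddSubmonoid.closure A).zero_mem, by simp⟩
    | add y z hy hz ihy ihz =>
      obtain ⟨p1, q1, hp1, hq1, he1⟩ := ihy
      obtain ⟨p2, q2, hp2, hq2, he2⟩ := ihz
      exact ⟨p1 + p2, q1 + q2, (AddSubmonoid.closure A).add_mem hp1 hp2,
        (AddSubmonoid.closure A).add_mem hq1 hq2, by push_cast; omega⟩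
    | neg y hy ihy =>
      obtain ⟨p, q, hp, hq, he⟩ := ihy
      exact ⟨q, p, hq, hp, by omega⟩
  obtain ⟨p, q, hp, hq, he⟩ := key 1 h1T
  have hpq : p = q + 1 := by omega
  obtain ⟨k1, hk1⟩ := good_of_closure hp
  obtain ⟨k2, hk2⟩ := good_of_closure hq
  exact ⟨q, k1, k2, hpq ▸ hk1, hk2⟩

lemma interval_good (A : Set ℕ) {q k1 k2 : ℕ} (h1 : Good A k1 (q + 1)) (h2 : Good A k2 q) :
    ∃ k G : ℕ, 0 < G ∧ ∀ m : ℕ, G ≤ m → m ≤ 2 * G → Good A k m := by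
  set P := q + 1 with hP
  refine ⟨3 * P * k1 + P * k2, P * P, by positivity, ?_⟩
  intro m hm1 hm2
  set b := (2 * (P * P) - m) % P with hb
  have hbP : b < P := Nat.mod_lt _ (by omega)
  have hdvd : P ∣ m + b := by
    have h1' : (2 * (P * P) - m) % P ≡ 2 * (P * P) - m [MOD P] := Nat.mod_modEq _ _
    have h2' : m + (2 * (P * P) - m) = 2 * (P * P) := by omega
    have : m + b ≡ 2 * (P * P) [MOD P] := by
      calc m + b ≡ m + (2 * (P * P) - m) [MOD P] := Nat.ModEq.add_left m h1'
        _ = 2 * (P * P) := h2'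
    have h3' : 2 * (P * P) ≡ 0 [MOD P] := (Nat.modEq_zero_iff_dvd).2 ⟨2 * P, by ring⟩
    exact (Nat.modEq_zero_iff_dvd).1 (this.trans h3')
  obtain ⟨t, ht⟩ := hdvd
  have htb : b ≤ t := by nlinarith [ht, hm1]
  have htle : t ≤ 3 * P := by nlinarith [ht, hm2, hbP]
  -- m = (t - b) * P + b * q
  have hrepr : (t - b) * P + b * q = m := by
    have e1 : (t - b) * P = t * P - b * P := Nat.sub_mul t b P
    have e2 : b * q + b = b * P := by rw [hP]; ring
    have e3 : b * P ≤ t * P := Nat.mul_le_mul_right P htb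
    have e4 : t * P = m + b := by rw [mul_comm]; omega
    have e5 : b ≤ b * P := Nat.le_mul_of_pos_right b (by omega)
    omega
  have g1 : Good A ((t - b) * k1) ((t - b) * P) := good_nsmul h1 (t - b)
  have g2 : Good A (b * k2) (b * q) := good_nsmul h2 b
  have := good_add g1 g2
  rw [hrepr] at this
  apply good_mono _ this
  have : t - b ≤ 3 * P := by omega
  have : b ≤ P := by omega
  nlinarith

lemma pigeon (D : Set ℕ) (hD0 : 0 ∈ D) (hcnt : ∀ n : ℕ, 1 ≤ n → (n : ℝ) < 2 * cnt D n) :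
    ∀ n : ℕ, ∃ x y, x ∈ D ∧ y ∈ D ∧ x + y = n := by
  classical
  intro n
  rcases Nat.eq_zero_or_pos n with rfl | hn
  · exact ⟨0, 0, hD0, hD0, rfl⟩
  have h2 : n < 2 * cnt D n := by exact_mod_cast hcnt n hn
  set T : Finset ℕ := insert 0 ((Finset.Icc 1 n).filter (· ∈ D)) with hT
  have hTmem : ∀ x ∈ T, x ∈ D ∧ x ≤ n := by
    intro x hx
    simp only [hT, Finset.mem_insert, Finset.mem_filter, Finset.mem_Icc] at hx
    rcases hx with rfl | ⟨⟨_, h⟩, hD⟩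
    · exact ⟨hD0, Nat.zero_le n⟩
    · exact ⟨hD, h⟩
  have hTcard : T.card = cnt D n + 1 := by
    rw [hT, Finset.card_insert_of_notMem (by simp), cnt]
  set T2 : Finset ℕ := T.image (fun x => n - x) with hT2
  have hT2card : T2.card = T.card := by
    rw [hT2]
    apply Finset.card_image_of_injOn
    intro x hx y hy hxy
    have h1 := (hTmem x hx).2
    have h2 := (hTmem y hy).2
    have hxy' : n - x = n - y := by simpa using hxy
    omega
  have hsub : T ∪ T2 ⊆ Finset.range (n + 1) := by
    intro x hx
    rcases Finset.mem_union.1 hx with h | h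
    · exact Finset.mem_range.2 (by have := (hTmem x h).2; omega)
    · rw [hT2] at h
      obtain ⟨y, hy, rfl⟩ := Finset.mem_image.1 h
      exact Finset.mem_range.2 (by omega)
  have hcard : (T ∪ T2).card + (T ∩ T2).card = T.card + T2.card :=
    Finset.card_union_add_card_inter T T2
  have hU : (T ∪ T2).card ≤ n + 1 := by
    calc (T ∪ T2).card ≤ (Finset.range (n+1)).card := Finset.card_le_card hsub
      _ = n + 1 := Finset.card_range _
  have hint : (T ∩ T2).Nonempty := by
    rw [← Finset.card_pos]
    omega
  obtain ⟨x, hx⟩ := hint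
  have hx1 := Finset.mem_inter.1 hx
  obtain ⟨y, hy, hxy⟩ := Finset.mem_image.1 (by rw [← hT2]; exact hx1.2)
  refine ⟨x, y, (hTmem x hx1.1).1, (hTmem y hy).1, ?_⟩
  have := (hTmem y hy).2
  omega

lemma exact_of_card : ∀ (k : ℕ) (M : Multiset ℕ), M.card = k →
    ∃ c : Fin k → ℕ, (∀ i, c i ∈ M) ∧ ∑ i, c i = M.sum := by
  intro k
  induction k with
  | zero =>
    intro M hM
    refine ⟨fun i => 0, fun i => i.elim0, ?_⟩
    rw [Multiset.card_eq_zero.1 hM]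
    simp
  | succ m IH =>
    intro M hM
    have hne : M ≠ 0 := by
      intro h; rw [h] at hM; simp at hM
    obtain ⟨a, ha⟩ := Multiset.exists_mem_of_ne_zero hne
    have herase : a ::ₘ M.erase a = M := Multiset.cons_erase ha
    have hcard : (M.erase a).card = m := by
      rw [Multiset.card_erase_of_mem ha, hM]
      rfl
    obtain ⟨c', hc'1, hc'2⟩ := IH (M.erase a) hcard
    refine ⟨Fin.cons a c', ?_, ?_⟩
    · intro i
      refine Fin.cases ?_ ?_ i
      · simpa using ha
      · intro j
        simpa using Multiset.mem_of_mem_erase (hc'1 j)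
    · rw [Fin.sum_cons, hc'2, ← Multiset.sum_cons, herase]

lemma exact_of_good {A : Set ℕ} (h0 : 0 ∈ A) {k n : ℕ} (hg : Good A k n) :
    ∃ c : Fin k → ℕ, (∀ i, c i ∈ A) ∧ ∑ i, c i = n := by
  obtain ⟨M, hM, hc, hs⟩ := hg
  set M' : Multiset ℕ := M + Multiset.replicate (k - M.card) 0 with hM'
  have hcard : M'.card = k := by
    rw [hM', Multiset.card_add, Multiset.card_replicate]; omega
  have hmem : ∀ x ∈ M', x ∈ A := by
    intro x hx
    rcases Multiset.mem_add.1 hx with h | h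
    · exact hM x h
    · rw [Multiset.eq_of_mem_replicate h]; exact h0
  have hsum : M'.sum = n := by
    rw [hM', Multiset.sum_add, Multiset.sum_replicate]
    simp [hs]
  obtain ⟨c, hc1, hc2⟩ := exact_of_card k M' hcard
  exact ⟨c, fun i => hmem _ (hc1 i), by rw [hc2, hsum]⟩

theorem nash_nathanson (A : Set ℕ) (h0 : 0 ∈ A)
    (hd : 0 < lowerDensity A)
    (hgcd : ∀ d : ℕ, (∀ a ∈ A, d ∣ a) → d = 1) :
    ∃ h : ℕ, 0 < h ∧ IsAsymptoticBasisOfOrder A h := by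
  classical
  -- Step 1: density bound
  set L := lowerDensity A with hL
  set δ : ℝ := min (L / 2) (1 / 2) with hδ
  have hδpos : 0 < δ := by
    rw [hδ]; exact lt_min (by linarith) (by norm_num)
  have hδlt : δ < L := by
    rw [hδ]
    calc min (L/2) (1/2) ≤ L/2 := min_le_left _ _
      _ < L := by linarith
  have hbdd : IsBoundedUnder (· ≥ ·) atTop (fun n : ℕ => (countingFn A n : ℝ) / (n : ℝ)) :=
    ⟨0, Filter.eventually_map.2 (Filter.Eventually.of_forall (fun n => by positivity))⟩
  have hev : ∀ᶠ n : ℕ in atTop, δ < (countingFn A n : ℝ) / (n : ℝ) :=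
    eventually_lt_of_lt_liminf (by rw [hL] at hδlt; exact hδlt) hbdd
  obtain ⟨N0, hN0⟩ := Filter.eventually_atTop.1 hev
  have hdens : ∀ n : ℕ, N0 + 1 ≤ n → δ * n ≤ cnt A n := by
    intro n hn
    have h1 := hN0 n (by omega)
    rw [countingFn_eq] at h1
    have hnpos : (0:ℝ) < n := by exact_mod_cast Nat.lt_of_lt_of_le (Nat.succ_pos N0) hn
    rw [lt_div_iff₀ hnpos] at h1
    exact le_of_lt h1
  -- Step 2: consecutive representable numbers and the interval
  obtain ⟨q, k1, k2, hg1, hg2⟩ := exists_consecutive A h0 hgcd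
  obtain ⟨k0, G, hGpos, hint⟩ := interval_good A hg1 hg2
  set K := k0 + 1 with hK
  have hGoodG : Good A K G := good_mono (by omega) (hint G le_rfl (by omega))
  set N : ℕ := max (N0 + 1) G with hN
  have hNpos : 0 < N := by
    have : G ≤ N := le_max_right _ _
    omega
  set δ' : ℝ := min δ ((G : ℝ) / (N : ℝ)) with hδ'
  have hδ'pos : 0 < δ' := by
    rw [hδ']
    apply lt_min hδpos
    apply div_pos (by exact_mod_cast hGpos) (by exact_mod_cast hNpos)
  have hδ'le1 : δ' ≤ 1 := by
    rw [hδ']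
    refine le_trans (min_le_right _ _) ?_
    rw [div_le_one (by exact_mod_cast hNpos)]
    exact_mod_cast le_max_right (N0 + 1) G
  -- Step 3: the sets C j
  set C : ℕ → Set ℕ := fun j => {m : ℕ | Good A (j * K) (m + j * G)} with hC
  have hC0 : ∀ j, 0 ∈ C j := by
    intro j
    show Good A (j * K) (0 + j * G)
    rw [zero_add]
    exact good_nsmul hGoodG j
  have hCadd : ∀ i j, C i + C j ⊆ C (i + j) := by
    intro i j x hx
    obtain ⟨m1, hm1, m2, hm2, rfl⟩ := hx
    show Good A ((i + j) * K) (m1 + m2 + (i + j) * G)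
    have := good_add (hm1 : Good A (i * K) (m1 + i * G)) (hm2 : Good A (j * K) (m2 + j * G))
    have e1 : i * K + j * K = (i + j) * K := by ring
    have e2 : m1 + i * G + (m2 + j * G) = m1 + m2 + (i + j) * G := by ring
    rwa [e1, e2] at this
  have hAC : A ⊆ C 1 := by
    intro a ha
    show Good A (1 * K) (a + 1 * G)
    have := good_add (good_mem ha) (hint G le_rfl (by omega))
    have e : (1 : ℕ) + k0 = 1 * K := by rw [hK]; ring
    rw [e] at this
    convert this using 2
    ring
  have hC1dens : ∀ n : ℕ, δ' * n ≤ cnt (C 1) n := by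
    intro n
    rcases Nat.eq_zero_or_pos n with rfl | hn
    · simp
    rcases le_or_gt n G with hcase | hcase
    · -- n ≤ G : all of [1,n] is in C 1
      have : cnt (C 1) n = n := by
        rw [cnt, Finset.filter_true_of_mem, Nat.card_Icc]
        · omega
        · intro x hx
          rw [Finset.mem_Icc] at hx
          show Good A (1 * K) (x + 1 * G)
          rw [one_mul, one_mul]
          exact good_mono (by omega) (hint (x + G) (by omega) (by omega))
      rw [this]
      have h1n : (0:ℝ) ≤ n := by positivity
      nlinarith [hδ'le1]
    rcases le_or_gt n N with hcase2 | hcase2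
    · -- G < n ≤ N
      have h1 : (G : ℕ) ≤ cnt (C 1) n := by
        have : cnt (C 1) G = G := by
          rw [cnt, Finset.filter_true_of_mem, Nat.card_Icc]
          · omega
          · intro x hx
            rw [Finset.mem_Icc] at hx
            show Good A (1 * K) (x + 1 * G)
            rw [one_mul, one_mul]
            exact good_mono (by omega) (hint (x + G) (by omega) (by omega))
        rw [← this]
        exact cnt_mono_n _ (by omega)
      have h2 : δ' * n ≤ (G : ℝ) := by
        have hNR : (0:ℝ) < N := by exact_mod_cast hNpos
        have : δ' ≤ (G : ℝ) / N := min_le_right _ _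
        have hnN : (n : ℝ) ≤ N := by exact_mod_cast hcase2
        calc δ' * n ≤ ((G:ℝ)/N) * n := by
              apply mul_le_mul_of_nonneg_right this (by positivity)
          _ ≤ ((G:ℝ)/N) * N := by
              apply mul_le_mul_of_nonneg_left hnN (by positivity)
          _ = G := by field_simp
      calc δ' * n ≤ (G : ℝ) := h2
        _ ≤ cnt (C 1) n := by exact_mod_cast h1
    · -- n > N
      have h1 : δ * n ≤ cnt A n := hdens n (by omega)
      have h2 : cnt A n ≤ cnt (C 1) n := cnt_mono_set hAC n
      have h3 : δ' ≤ δ := min_le_left _ _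
      have : δ' * n ≤ δ * n := by
        apply mul_le_mul_of_nonneg_right h3 (by positivity)
      calc δ' * n ≤ δ * n := this
        _ ≤ cnt A n := h1
        _ ≤ cnt (C 1) n := by exact_mod_cast h2
  -- Step 4: iterate Schnirelmann
  have hiter : ∀ j n : ℕ, (1 - (1 - δ') ^ (j + 1)) * n ≤ cnt (C (j + 1)) n := by
    intro j
    induction j with
    | zero =>
      intro n
      have : (1 - (1 - δ') ^ (0 + 1)) = δ' := by ring
      rw [this]
      exact hC1dens n
    | succ m IH =>
      intro n
      have hs := sch (C (m + 1)) (C 1) (hC0 (m+1)) (hC0 1) δ' (le_of_lt hδ'pos) hC1dens n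
      have hsub : cnt (C (m + 1) + C 1) n ≤ cnt (C (m + 2)) n :=
        cnt_mono_set (hCadd (m + 1) 1) n
      have hcle : (cnt (C (m+1)) n : ℝ) ≤ n := by exact_mod_cast cnt_le (C (m+1)) n
      have hIH := IH n
      set c : ℝ := (cnt (C (m + 1)) n : ℝ) with hc
      set x : ℝ := (1 - δ') ^ (m + 1) with hx
      have hpow : (1 - δ') ^ (m + 1 + 1) = x * (1 - δ') := by rw [hx, pow_succ]
      rw [hpow]
      have hprod : (1 - δ') * ((1 - x) * n) ≤ (1 - δ') * c := by
        apply mul_le_mul_of_nonneg_left _ (by linarith)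
        linarith [hIH]
      have hsub' : (cnt (C (m + 1) + C 1) n : ℝ) ≤ cnt (C (m + 2)) n := by exact_mod_cast hsub
      nlinarith [hs, hsub']
  -- pick J with (1-δ')^(J+1) < 1/2
  obtain ⟨J0, hJ0⟩ := exists_pow_lt_of_lt_one (by norm_num : (0:ℝ) < 1/2)
    (by linarith : 1 - δ' < 1)
  have hxJ : (1 - δ') ^ (J0 + 1) < 1 / 2 := by
    calc (1 - δ') ^ (J0 + 1) ≤ (1 - δ') ^ J0 := by
          apply pow_le_pow_of_le_one (by linarith) (by linarith) (by omega)
      _ < 1/2 := hJ0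
  set J := J0 + 1 with hJ
  have hhalf : ∀ n : ℕ, 1 ≤ n → (n : ℝ) < 2 * cnt (C J) n := by
    intro n hn
    have := hiter J0 n
    have hnR : (1:ℝ) ≤ n := by exact_mod_cast hn
    nlinarith
  have hpig := pigeon (C J) (hC0 J) hhalf
  -- Step 5: conclude
  refine ⟨2 * (J * K), by positivity, ?_⟩
  rw [IsAsymptoticBasisOfOrder, eventually_atTop]
  refine ⟨2 * (J * G), fun m hm => ?_⟩
  obtain ⟨x, y, hxC, hyC, hxy⟩ := hpig (m - 2 * (J * G))
  have g1 : Good A (J * K) (x + J * G) := hxC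
  have g2 : Good A (J * K) (y + J * G) := hyC
  have := good_add g1 g2
  have e1 : J * K + J * K = 2 * (J * K) := by ring
  have e2 : x + J * G + (y + J * G) = m := by omega
  rw [e1, e2] at this
  exact exact_of_good h0 this
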